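/- Let K be a compact Lie group with Lie algebra 𝔨 and maximal torus T with Lie algebra 𝔱. For (λ, h) ∈ T × K with λ regular (i.e. 𝔨^λ = 𝔱) and 𝔨^h ∩ 𝔱 = {0}, the subspaces (1 − Ad_{h⁻¹})𝔱 and 𝔱^⊥ intersect trivially; hence their sum has dimension dim 𝔨. -/

import Mathlib

/-- If `λ ∈ T` is regular (`𝔨^λ = 𝔱`) and `𝔨^h ∩ 𝔱 = 0`, then `(1 - Ad_{h⁻¹})𝔱` and `𝔱ᗮ`
intersect trivially, hence their sum has dimension `dim 𝔨`. -/
theorem stmt16 {K V : Type*} [Group K] [NormedAddCommGroup V] [InnerProductSpace ℝ V]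
    [FiniteDimensional ℝ V] (Ad : K →* (V ≃ₗᵢ[ℝ] V)) (lam h : K) (𝔱 : Submodule ℝ V)
    (hreg : LinearMap.ker (((Ad lam).toLinearEquiv : V →ₗ[ℝ] V) - LinearMap.id) = 𝔱)
    (hfix : LinearMap.ker (((Ad h).toLinearEquiv : V →ₗ[ℝ] V) - LinearMap.id) ⊓ 𝔱 = ⊥) :
    Submodule.map (LinearMap.id - ((Ad h⁻¹).toLinearEquiv : V →ₗ[ℝ] V)) 𝔱 ⊓ 𝔱ᗮ = ⊥ ∧
      Module.finrank ℝ
          ↥(Submodule.map (LinearMap.id - ((Ad h⁻¹).toLinearEquiv : V →ₗ[ℝ] V)) 𝔱 ⊔ 𝔱ᗮ) =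
        Module.finrank ℝ V := by
  set f : V →ₗ[ℝ] V := LinearMap.id - ((Ad h⁻¹).toLinearEquiv : V →ₗ[ℝ] V) with hf
  -- key: x ∈ 𝔱, f x = 0 iff ... ; and f x ∈ 𝔱ᗮ with x ∈ 𝔱 forces f x = 0
  have hker : ∀ x ∈ 𝔱, Ad h⁻¹ x = x → x = 0 := by
    intro x hx hfx
    have hhx : Ad h x = x := by
      have : Ad h (Ad h⁻¹ x) = Ad h x := congrArg _ hfx
      have h2 : Ad h (Ad h⁻¹ x) = x := by simp
      rw [h2] at this; exact this.symm
    have : x ∈ LinearMap.ker (((Ad h).toLinearEquiv : V →ₗ[ℝ] V) - LinearMap.id) ⊓ 𝔱 := by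
      refine ⟨?_, hx⟩
      simp [LinearMap.mem_ker, hhx]
    rw [hfix] at this
    simpa using this
  have hbot : Submodule.map f 𝔱 ⊓ 𝔱ᗮ = ⊥ := by
    rw [Submodule.eq_bot_iff]
    rintro y hy
    rw [Submodule.mem_inf] at hy
    obtain ⟨⟨x, hx, rfl⟩, hy2⟩ := hy
    have hfx : f x = x - Ad h⁻¹ x := by simp [hf]
    have h0 : (inner ℝ x (f x) : ℝ) = 0 := (Submodule.mem_orthogonal 𝔱 _).mp hy2 x hx
    have h1 : (inner ℝ x ((Ad h⁻¹) x) : ℝ) = ‖x‖ * ‖(Ad h⁻¹) x‖ := by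
      rw [(Ad h⁻¹).norm_map]
      rw [hfx, inner_sub_right, real_inner_self_eq_norm_mul_norm] at h0
      linarith
    rw [inner_eq_norm_mul_iff_real, (Ad h⁻¹).norm_map] at h1
    rcases eq_or_ne x 0 with rfl | hx0
    · simp [hfx]
    · have : (Ad h⁻¹) x = x := by
        have hn : (0:ℝ) < ‖x‖ := norm_pos_iff.mpr hx0
        have := smul_right_injective V (ne_of_gt hn) h1
        exact this.symm
      have := hker x hx this
      exact absurd this hx0
  refine ⟨hbot, ?_⟩
  have hinj : LinearMap.ker (f.domRestrict 𝔱) = ⊥ := by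
    rw [LinearMap.ker_eq_bot']
    rintro ⟨x, hx⟩ hfx
    simp only [LinearMap.domRestrict_apply, hf, LinearMap.sub_apply, LinearMap.id_apply,
      sub_eq_zero] at hfx
    ext
    exact hker x hx hfx.symm
  have hrange : LinearMap.range (f.domRestrict 𝔱) = Submodule.map f 𝔱 := by
    rw [LinearMap.range_domRestrict]
  have hdim : Module.finrank ℝ (Submodule.map f 𝔱) = Module.finrank ℝ 𝔱 := by
    rw [← hrange]
    exact LinearMap.finrank_range_of_inj (LinearMap.ker_eq_bot.mp hinj)
  have hsum := Submodule.finrank_sup_add_finrank_inf_eq (Submodule.map f 𝔱) 𝔱ᗮ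
  rw [hbot] at hsum
  simp only [finrank_bot, add_zero] at hsum
  rw [hsum, hdim, 𝔱.finrank_add_finrank_orthogonal]
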